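/- Let V be a vector space. The composite N ∘ π, where π : ⊕_{i≥1} V^{⊗i} → ⊕_{i≥1} (V^{⊗i})_{Z_i} is the projection to cyclic coinvariants and N = Σ_i N_i is the norm operator (N_i = 1 + z_i + ... + z_i^{i−1} for the cyclic generator z_i of Z_i acting on V^{⊗i}), identifies the differential d : DR⁰(V) → DR¹(V): explicitly, under the isomorphism Θ : V⊗T(V) ≅ DR¹(V), for any x₁⊗...⊗x_k ∈ V^{⊗k} representing a class in DR⁰(V), Θ⁻¹(d[x₁...x_k]) = Σ_{i=1}^{k} (with appropriate Koszul signs) the cyclic rotation z^{i−1}·(x₁⊗...⊗x_k). -/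

import Mathlib

/- STATEMENT 4.  Under the isomorphism Θ : V⊗T(V) ≅ DR¹(V), the differential
d : DR⁰(V) → DR¹(V) is identified with the norm map N composed with the
projection to cyclic coinvariants: for a word x₁⋯x_k representing a class of
DR⁰(V), one has  Θ⁻¹(d[x₁⋯x_k]) = Σ_{i=1}^{k} z^{i-1}·(x₁⊗⋯⊗x_k)
(the sum of the cyclic rotations x_i ⊗ (x_{i+1}⋯x_k x_1⋯x_{i-1})).
The model is the one of Statement 2 (Ω¹ = T(V)⊗(V⊗T(V)), DR¹ its commutator
quotient); d[a] is represented by 1 ⊗ ν(a), where ν : T(V) → V⊗T(V) is the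
canonical splitting (ν(1) = 0, ν(x·w) = x⊗w for x ∈ V). -/

open TensorProduct

noncomputable section

variable (V : Type) [AddCommGroup V] [Module ℂ V]

abbrev TA := TensorAlgebra ℂ V

abbrev Om := TA V ⊗[ℂ] (V ⊗[ℂ] TA V)

def mu : V ⊗[ℂ] TA V →ₗ[ℂ] TA V :=
  TensorProduct.lift ((LinearMap.mul ℂ (TA V)).comp (TensorAlgebra.ι ℂ))

def lAct2 (a : TA V) : Om V →ₗ[ℂ] Om V :=
  TensorProduct.map (LinearMap.mulLeft ℂ a) LinearMap.id

def rAct2 (c : ℂ) (α : V ⊗[ℂ] TA V) : Om V →ₗ[ℂ] Om V :=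
  c • LinearMap.id
  + TensorProduct.map LinearMap.id
      (TensorProduct.map LinearMap.id (LinearMap.mulRight ℂ (mu V α)))
  - ((TensorProduct.mk ℂ (TA V) (V ⊗[ℂ] TA V)).flip α).comp
      ((LinearMap.mul' ℂ (TA V)).comp (TensorProduct.map LinearMap.id (mu V)))

def commSub : Submodule ℂ (Om V) :=
  Submodule.span ℂ
    {u | ∃ (c : ℂ) (α : V ⊗[ℂ] TA V) (ω : Om V),
      u = lAct2 V (algebraMap ℂ (TA V) c + mu V α) ω - rAct2 V c α ω}

abbrev DR1 := Om V ⧸ commSub V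

def Theta : V ⊗[ℂ] TA V →ₗ[ℂ] DR1 V :=
  (commSub V).mkQ.comp
    ((TensorProduct.comm ℂ (V ⊗[ℂ] TA V) (TA V)).toLinearMap.comp
      (TensorProduct.map ((TensorProduct.mk ℂ V (TA V)).flip (1 : TA V)) LinearMap.id))

/-- The product in T(V) of a list of elements of V. -/
def prodW (ℓ : List V) : TA V := (ℓ.map (TensorAlgebra.ι ℂ)).prod

lemma Theta_tmul (x : V) (w : TA V) :
    Theta V (x ⊗ₜ[ℂ] w) = (commSub V).mkQ (w ⊗ₜ[ℂ] (x ⊗ₜ[ℂ] (1 : TA V))) := by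
  simp [Theta]

lemma key (y x : V) (b w : TA V) :
    (commSub V).mkQ ((TensorAlgebra.ι ℂ y * b) ⊗ₜ[ℂ] (x ⊗ₜ[ℂ] w))
      = (commSub V).mkQ (b ⊗ₜ[ℂ] (x ⊗ₜ[ℂ] (w * TensorAlgebra.ι ℂ y)))
        - (commSub V).mkQ ((b * (TensorAlgebra.ι ℂ x * w)) ⊗ₜ[ℂ] (y ⊗ₜ[ℂ] (1 : TA V))) := by
  have hmem : lAct2 V (algebraMap ℂ (TA V) 0 + mu V (y ⊗ₜ[ℂ] (1 : TA V))) (b ⊗ₜ[ℂ] (x ⊗ₜ[ℂ] w))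
      - rAct2 V 0 (y ⊗ₜ[ℂ] (1 : TA V)) (b ⊗ₜ[ℂ] (x ⊗ₜ[ℂ] w)) ∈ commSub V :=
    Submodule.subset_span ⟨0, y ⊗ₜ[ℂ] (1 : TA V), b ⊗ₜ[ℂ] (x ⊗ₜ[ℂ] w), rfl⟩
  have h1 : lAct2 V (algebraMap ℂ (TA V) 0 + mu V (y ⊗ₜ[ℂ] (1 : TA V))) (b ⊗ₜ[ℂ] (x ⊗ₜ[ℂ] w))
      = (TensorAlgebra.ι ℂ y * b) ⊗ₜ[ℂ] (x ⊗ₜ[ℂ] w) := by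
    simp [lAct2, mu]
  have h2 : rAct2 V 0 (y ⊗ₜ[ℂ] (1 : TA V)) (b ⊗ₜ[ℂ] (x ⊗ₜ[ℂ] w))
      = b ⊗ₜ[ℂ] (x ⊗ₜ[ℂ] (w * TensorAlgebra.ι ℂ y))
        - (b * (TensorAlgebra.ι ℂ x * w)) ⊗ₜ[ℂ] (y ⊗ₜ[ℂ] (1 : TA V)) := by
    simp [rAct2, mu, LinearMap.sub_apply, LinearMap.add_apply]
  rw [h1, h2] at hmem
  rw [← map_sub, ← sub_eq_zero, ← map_sub, Submodule.mkQ_apply,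
    Submodule.Quotient.mk_eq_zero]
  exact hmem

lemma prodW_cons (x : V) (ℓ : List V) :
    prodW V (x :: ℓ) = TensorAlgebra.ι ℂ x * prodW V ℓ := by simp [prodW]

lemma prodW_append (A B : List V) :
    prodW V (A ++ B) = prodW V A * prodW V B := by simp [prodW]

lemma tele (x : V) : ∀ (P Q : List V),
    (commSub V).mkQ (prodW V P ⊗ₜ[ℂ] (x ⊗ₜ[ℂ] prodW V Q))
      = (commSub V).mkQ ((1 : TA V) ⊗ₜ[ℂ] (x ⊗ₜ[ℂ] (prodW V Q * prodW V P)))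
        - ∑ j ∈ Finset.range P.length,
            (commSub V).mkQ (prodW V (P.drop (j+1) ++ [x] ++ Q ++ P.take j)
              ⊗ₜ[ℂ] (P.getD j 0 ⊗ₜ[ℂ] (1 : TA V))) := by
  intro P
  induction P with
  | nil => intro Q; simp [prodW]
  | cons y P' ih =>
    intro Q
    have hq : prodW V Q * TensorAlgebra.ι ℂ y = prodW V (Q ++ [y]) := by
      simp [prodW_append, prodW]
    rw [prodW_cons, key, hq, ih (Q ++ [y]), List.length_cons, Finset.sum_range_succ']
    have e1 : prodW V (Q ++ [y]) * prodW V P'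
        = prodW V Q * (TensorAlgebra.ι ℂ y * prodW V P') := by
      simp [prodW_append, prodW, mul_assoc]
    have e2 : ∀ j ∈ Finset.range P'.length,
        (commSub V).mkQ (prodW V (List.drop (j+1+1) (y :: P') ++ [x] ++ Q ++ List.take (j+1) (y :: P'))
            ⊗ₜ[ℂ] ((y :: P').getD (j+1) 0 ⊗ₜ[ℂ] (1 : TA V)))
        = (commSub V).mkQ (prodW V (List.drop (j+1) P' ++ [x] ++ (Q ++ [y]) ++ List.take j P')
            ⊗ₜ[ℂ] (P'.getD j 0 ⊗ₜ[ℂ] (1 : TA V))) := by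
      intro j _
      congr 3
      simp [List.append_assoc]
    rw [Finset.sum_congr rfl e2, e1]
    have e3 : prodW V (List.drop (0+1) (y :: P') ++ [x] ++ Q ++ List.take 0 (y :: P'))
        = prodW V P' * (TensorAlgebra.ι ℂ x * prodW V Q) := by
      simp [prodW_append, prodW, mul_assoc]
    simp only [List.drop_succ_cons, List.drop_zero, List.take_zero, List.append_nil,
      List.getD_cons_zero] at e3 ⊢
    rw [e3]
    abel

/-- Lemma 2.11:  Θ(N·(x₁⊗⋯⊗x_k)) = d[x₁⋯x_k], i.e. the differential
DR⁰ → DR¹ is the norm map under the identification Θ. -/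
theorem statement_4 (ν : TA V →ₗ[ℂ] V ⊗[ℂ] TA V)
    (hν1 : ν 1 = 0)
    (hν : ∀ (x : V) (w : TA V), ν (TensorAlgebra.ι ℂ x * w) = x ⊗ₜ[ℂ] w) :
    ∀ (k : ℕ) (xs : Fin k → V),
      Theta V (∑ i : Fin k,
          (xs i) ⊗ₜ[ℂ] prodW V (((List.ofFn xs).rotate (i.val + 1)).take (k - 1)))
        = (commSub V).mkQ ((1 : TA V) ⊗ₜ[ℂ] ν (prodW V (List.ofFn xs))) := by
  intro k xs
  match k with
  | 0 => simp [prodW, hν1]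
  | (j+1) =>
    set L' : List V := List.ofFn (fun i : Fin j => xs i.succ) with hL'
    have hlen : L'.length = j := by simp [hL']
    have hofn : List.ofFn xs = xs 0 :: L' := List.ofFn_succ
    have hrot0 : ((List.ofFn xs).rotate 1).take (j + 1 - 1) = L' := by
      rw [hofn, List.rotate_cons_succ, List.rotate_zero]
      simpa using List.take_left' hlen (l₂ := [xs 0])
    have hrots : ∀ i : Fin j, ((List.ofFn xs).rotate (i.val + 1 + 1)).take (j + 1 - 1)
        = L'.drop (i.val + 1) ++ [xs 0] ++ L'.take i.val := by
      intro i
      have hi : i.val + 1 ≤ L'.length := by rw [hlen]; omega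
      rw [hofn, List.rotate_cons_succ,
        List.rotate_eq_drop_append_take (by simp [hlen]),
        List.drop_append_of_le_length hi, List.take_append_of_le_length hi]
      rw [List.take_append]
      have h1 : j + 1 - 1 ≥ (L'.drop (i.val + 1) ++ [xs 0]).length := by
        simp [hlen]; omega
      rw [List.take_of_length_le h1]
      have hij := i.isLt
      have h2 : List.take (j + 1 - 1 - (L'.drop (i.val + 1) ++ [xs 0]).length)
          (L'.take (i.val + 1)) = L'.take i.val := by
        rw [List.take_take]
        simp only [List.length_append, List.length_drop, List.length_singleton, hlen]
        congr 1
        omega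
      rw [h2]
    have hget : ∀ i : Fin j, L'.getD i.val 0 = xs i.succ := by
      intro i
      rw [List.getD_eq_getElem _ _ (by rw [hlen]; exact i.isLt)]
      simp [hL']
    have htele := tele V (xs 0) L' []
    have hpn : prodW V ([] : List V) = 1 := rfl
    rw [hpn, one_mul] at htele
    simp only [List.append_nil] at htele
    rw [map_sum, Fin.sum_univ_succ]
    simp only [Fin.val_zero, zero_add, Fin.val_succ, hrot0, hrots, Theta_tmul]
    rw [hofn, prodW_cons, hν]
    rw [htele, hlen, Finset.sum_range]
    simp only [hget]
    abel

end
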